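/- arXiv:0904.3719 — 3 statements merged into one kernel-verified Lean document; each statement's English description precedes it below -/
import Mathlib

section
/- (Exclusion Lemma, two-module case) Let p be a prime, G cyclic of order p^n with generator σ, W an F_p[G]-module, and U, V submodules of W. Then U ∩ V = 0 if and only if U^G ∩ V^G = 0. -/
/-- (Exclusion Lemma, two-module case) For submodules `U, V` of an `𝔽_p[G]`-module `W`
(`G` cyclic of order `p^n` generated by `σ`), `U ∩ V = 0` if and only if the fixed
subspaces satisfy `U^G ∩ V^G = 0`. -/
theorem stmt_6 (p n : ℕ) (hp : p.Prime)
    (G : Type*) [CommGroup G] [Fintype G] (hG : Fintype.card G = p ^ n)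
    (σ : G) (hσ : ∀ g : G, g ∈ Subgroup.zpowers σ)
    (W : Type*) [AddCommGroup W] [Module (MonoidAlgebra (ZMod p) G) W]
    (U V : Submodule (MonoidAlgebra (ZMod p) G) W) :
    U ⊓ V = ⊥ ↔
      ∀ x : W, x ∈ U → x ∈ V →
        (∀ g : G, MonoidAlgebra.of (ZMod p) G g • x = x) → x = 0 := by
  constructor
  · intro hbot x hU hV _
    have hx : x ∈ U ⊓ V := ⟨hU, hV⟩
    rw [hbot, Submodule.mem_bot] at hx
    exact hx
  · intro h
    haveI : Fact p.Prime := ⟨hp⟩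
    set A := MonoidAlgebra (ZMod p) G with hA
    haveI : CharP A p :=
      charP_of_injective_algebraMap (algebraMap (ZMod p) A).injective p
    set t : A := MonoidAlgebra.of (ZMod p) G σ - 1 with ht
    have htn : t ^ (p ^ n) = 0 := by
      rw [ht, sub_pow_char_pow, ← map_pow, ← hG, pow_card_eq_one]
      rw [one_pow, map_one, sub_self]
    have key : ∀ k, ∀ x : W, x ∈ U → x ∈ V → t ^ k • x = 0 → x = 0 := by
      intro k
      induction k with
      | zero => intro x _ _ hx; simpa using hx
      | succ k ih =>
        intro x hU hV hx
        have hy : t • x = 0 := by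
          refine ih (t • x) (U.smul_mem t hU) (V.smul_mem t hV) ?_
          rw [smul_smul, ← pow_succ]
          exact hx
        have hfix : MonoidAlgebra.of (ZMod p) G σ • x = x := by
          rw [ht, sub_smul, one_smul, sub_eq_zero] at hy
          exact hy
        refine h x hU hV ?_
        intro g
        obtain ⟨m, rfl⟩ := mem_powers_iff_mem_zpowers.mpr (hσ g)
        rw [map_pow]
        induction m with
        | zero => simp
        | succ m ihm => rw [pow_succ, mul_smul, hfix, ihm]
    rw [eq_bot_iff]
    rintro x ⟨hU, hV⟩
    rw [Submodule.mem_bot]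
    exact key (p ^ n) x hU hV (by rw [htn, zero_smul])
end

section
/- (Exclusion Lemma, finite case) Let p be a prime, G cyclic of order p^n, W an F_p[G]-module, and U_1, ..., U_m submodules of W. The submodules U_1, ..., U_m form an internal direct sum (i.e., are independent as F_p[G]-submodules) if and only if the F_p-subspaces U_1^G, ..., U_m^G are independent (form an internal direct sum) inside W^G. -/
/-- (Exclusion Lemma, finite case) Submodules `U_1, …, U_m` of an `𝔽_p[G]`-module `W`
(`G` cyclic of order `p^n`, generated by `σ`) form an internal direct sum if and only if
their fixed subspaces `U_1^G, …, U_m^G` are independent as `𝔽_p`-subspaces of `W^G`. -/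
theorem stmt_7 (p n m : ℕ) (hp : p.Prime)
    (G : Type*) [CommGroup G] [Fintype G] (hG : Fintype.card G = p ^ n)
    (σ : G) (hσ : ∀ g : G, g ∈ Subgroup.zpowers σ)
    (W : Type*) [AddCommGroup W] [Module (MonoidAlgebra (ZMod p) G) W]
    (U : Fin m → Submodule (MonoidAlgebra (ZMod p) G) W) :
    (∀ x : Fin m → W, (∀ i, x i ∈ U i) → ∑ i, x i = 0 → ∀ i, x i = 0) ↔
    (∀ x : Fin m → W,
        (∀ i, x i ∈ U i ∧ ∀ g : G, MonoidAlgebra.of (ZMod p) G g • x i = x i) →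
        ∑ i, x i = 0 → ∀ i, x i = 0) := by
  haveI : Fact p.Prime := ⟨hp⟩
  haveI : CharP (MonoidAlgebra (ZMod p) G) p := by
    apply charP_of_injective_algebraMap (R := ZMod p)
    rw [MonoidAlgebra.coe_algebraMap]
    exact MonoidAlgebra.single_right_injective (m := (1 : G))
  classical
  set R := MonoidAlgebra (ZMod p) G
  set t : R := MonoidAlgebra.of (ZMod p) G σ - 1 with ht
  have htpow : t ^ (p ^ n) = 0 := by
    rw [ht, sub_pow_char_pow, one_pow, ← map_pow, ← hG, pow_card_eq_one, map_one, sub_self]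
  constructor
  · intro h x hx hsum i
    exact h x (fun i => (hx i).1) hsum i
  · intro h x hx hsum i
    by_contra hxi
    -- the predicate: some t^k • x j is nonzero
    set P : ℕ → Prop := fun k => ∃ j, t ^ k • x j ≠ 0 with hP
    have hP0 : P 0 := ⟨i, by simpa using hxi⟩
    have hPtop : ¬ P (p ^ n) := by
      rintro ⟨j, hj⟩
      exact hj (by rw [htpow, zero_smul])
    set k := Nat.findGreatest P (p ^ n) with hk
    have hPk : P k := Nat.findGreatest_spec (Nat.zero_le _) hP0
    have hklt : k < p ^ n := by
      rcases lt_or_eq_of_le (Nat.findGreatest_le (P := P) (p ^ n)) with h' | h'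
      · exact h'
      · exact absurd (h' ▸ hPk) hPtop
    have hsucc : ∀ j, t ^ (k + 1) • x j = 0 := by
      intro j
      by_contra hne
      exact Nat.findGreatest_is_greatest (Nat.lt_succ_self k) hklt ⟨j, hne⟩
    set y : Fin m → W := fun j => t ^ k • x j with hy
    have hyfix : ∀ j, MonoidAlgebra.of (ZMod p) G σ • y j = y j := by
      intro j
      have : t • y j = 0 := by
        rw [hy]; simp only [← mul_smul, ← pow_succ']; exact hsucc j
      have := sub_eq_zero.mp (by rw [ht] at this; simpa [sub_smul, one_smul, sub_eq_zero] using this)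
      simpa using this
    have hyfix' : ∀ j, ∀ g : G, MonoidAlgebra.of (ZMod p) G g • y j = y j := by
      intro j g
      have key : ∀ l : ℕ, MonoidAlgebra.of (ZMod p) G (σ ^ l) • y j = y j := by
        intro l
        induction l with
        | zero => rw [pow_zero, map_one, one_smul]
        | succ l ih => rw [pow_succ, map_mul, mul_smul, hyfix j, ih]
      obtain ⟨l, rfl⟩ := mem_powers_iff_mem_zpowers.mpr (hσ g)
      exact key l
    have hysum : ∑ j, y j = 0 := by
      rw [hy, ← Finset.smul_sum, hsum, smul_zero]
    have := h y (fun j => ⟨(U j).smul_mem _ (hx j), hyfix' j⟩) hysum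
    obtain ⟨j, hj⟩ := hPk
    exact hj (this j)
end

section
/- Let p be a prime, G cyclic of order p^n with generator σ, and W an F_p[G]-module. Suppose for each 1 ≤ k ≤ p^n one chooses an F_p-subspace complement basis I_k of V_{k+1} inside V_k (with V_{p^n + 1} := 0), and for each x ∈ I_k an element α_x ∈ W with (σ-1)^{k-1} α_x = x. Then W is the internal direct sum over all k and x ∈ I_k of the cyclic F_p[G]-submodules generated by the α_x. -/
/-- `V_i = im((σ-1)^{i-1}) ∩ W^G` for an `𝔽_p[G]`-module `W`. -/
def Vset (p : ℕ) {G : Type*} [CommGroup G] (σ : G) (W : Type*)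
    [AddCommGroup W] [Module (MonoidAlgebra (ZMod p) G) W] (i : ℕ) : Set W :=
  {x | (∃ y : W, (MonoidAlgebra.of (ZMod p) G σ - 1) ^ (i - 1) • y = x) ∧
    ∀ g : G, MonoidAlgebra.of (ZMod p) G g • x = x}

lemma aux_tau_pow (p n : ℕ) (hp : p.Prime) {G : Type*} [CommGroup G] [Fintype G]
    (hG : Fintype.card G = p ^ n) (σ : G) :
    (MonoidAlgebra.of (ZMod p) G σ - 1) ^ (p ^ n) = 0 := by
  classical
  haveI : Fact p.Prime := ⟨hp⟩
  haveI : CharP (MonoidAlgebra (ZMod p) G) p := by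
    refine charP_of_injective_algebraMap (R := ZMod p) ?_ p
    intro a b h
    exact (algebraMap (ZMod p) (MonoidAlgebra (ZMod p) G)).injective h
  rw [sub_pow_char_pow, ← map_pow, ← hG, pow_card_eq_one, map_one, one_pow, sub_self]

lemma aux_fixed_iff (p : ℕ) {G : Type*} [CommGroup G] [Fintype G] (σ : G)
    (hσ : ∀ g : G, g ∈ Subgroup.zpowers σ)
    {W : Type*} [AddCommGroup W] [Module (MonoidAlgebra (ZMod p) G) W] (w : W) :
    (∀ g : G, MonoidAlgebra.of (ZMod p) G g • w = w) ↔
      (MonoidAlgebra.of (ZMod p) G σ - 1) • w = 0 := by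
  constructor
  · intro h; rw [sub_smul, one_smul, h σ, sub_self]
  · intro h g
    have hσw : MonoidAlgebra.of (ZMod p) G σ • w = w := by
      rw [sub_smul, one_smul, sub_eq_zero] at h; exact h
    obtain ⟨m, hm⟩ := mem_powers_iff_mem_zpowers.2 (hσ g)
    subst hm
    rw [map_pow]
    induction m with
    | zero => simp
    | succ m ih => rw [pow_succ, mul_smul, hσw, ih]

lemma aux_span_tau (p : ℕ) {G : Type*} [CommGroup G] [Fintype G] (σ : G)
    (hσ : ∀ g : G, g ∈ Subgroup.zpowers σ) (r : MonoidAlgebra (ZMod p) G) :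
    r ∈ Submodule.span (ZMod p)
      (Set.range fun j : ℕ => (MonoidAlgebra.of (ZMod p) G σ - 1) ^ j) := by
  induction r using MonoidAlgebra.induction_on with
  | of g =>
    obtain ⟨m, hm⟩ := mem_powers_iff_mem_zpowers.2 (hσ g)
    subst hm
    rw [map_pow]
    have h1 : (MonoidAlgebra.of (ZMod p) G σ) ^ m = ∑ j ∈ Finset.range (m + 1),
        ((m.choose j : ZMod p)) • (MonoidAlgebra.of (ZMod p) G σ - 1) ^ j := by
      conv_lhs => rw [show MonoidAlgebra.of (ZMod p) G σ
        = (MonoidAlgebra.of (ZMod p) G σ - 1) + 1 from by ring]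
      rw [add_pow]
      refine Finset.sum_congr rfl fun j hj => ?_
      rw [Algebra.smul_def, map_natCast]; ring
    rw [h1]
    exact Submodule.sum_mem _ fun j hj =>
      Submodule.smul_mem _ _ (Submodule.subset_span ⟨j, rfl⟩)
  | add f g hf hg => exact Submodule.add_mem _ hf hg
  | smul r f hf => exact Submodule.smul_mem _ _ hf

/-- Suppose for each `1 ≤ k ≤ p^n` we are given a family `x` indexed by `ι` with
`k i ∈ [1, p^n]`, `x i ∈ V_{k i}`, the `x i` linearly independent over `𝔽_p`, such that
for each `j` the elements `x i` with `k i ≥ j` span `V_j` over `𝔽_p` (i.e. the `x i` with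
`k i = k` form a basis of a complement of `V_{k+1}` in `V_k`, and those with `k i = p^n` a
basis of `V_{p^n}`), and elements `α i` with `(σ-1)^{k i - 1} • α i = x i`.  Then `W` is
the internal direct sum of the cyclic `𝔽_p[G]`-submodules generated by the `α i`. -/
theorem stmt_10 (p n : ℕ) (hp : p.Prime)
    (G : Type*) [CommGroup G] [Fintype G] (hG : Fintype.card G = p ^ n)
    (σ : G) (hσ : ∀ g : G, g ∈ Subgroup.zpowers σ)
    (W : Type*) [AddCommGroup W] [Module (MonoidAlgebra (ZMod p) G) W]
    [Module (ZMod p) W] [IsScalarTower (ZMod p) (MonoidAlgebra (ZMod p) G) W]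
    (ι : Type*) (k : ι → ℕ) (x α : ι → W)
    (hk : ∀ i, 1 ≤ k i ∧ k i ≤ p ^ n)
    (hxV : ∀ i, x i ∈ Vset p σ W (k i))
    (hindep : LinearIndependent (ZMod p) x)
    (hspan : ∀ j, 1 ≤ j → j ≤ p ^ n →
      Vset p σ W j ⊆ ↑(Submodule.span (ZMod p) (x '' {i | j ≤ k i})))
    (hα : ∀ i, (MonoidAlgebra.of (ZMod p) G σ - 1) ^ (k i - 1) • α i = x i) :
    iSupIndep (fun i => Submodule.span (MonoidAlgebra (ZMod p) G) {α i}) ∧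
    (⨆ i, Submodule.span (MonoidAlgebra (ZMod p) G) {α i}) = ⊤ := by
  classical
  haveI : Fact p.Prime := ⟨hp⟩
  haveI : SMulCommClass (ZMod p) (MonoidAlgebra (ZMod p) G) W :=
    IsScalarTower.to_smulCommClass
  haveI : SMulCommClass (MonoidAlgebra (ZMod p) G) (ZMod p) W := SMulCommClass.symm _ _ _
  set τ : MonoidAlgebra (ZMod p) G := MonoidAlgebra.of (ZMod p) G σ - 1 with hτ
  have hτpn : τ ^ (p ^ n) = 0 := aux_tau_pow p n hp hG σ
  have hfix : ∀ w : W, (∀ g : G, MonoidAlgebra.of (ZMod p) G g • w = w) ↔ τ • w = 0 :=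
    fun w => aux_fixed_iff p σ hσ w
  have hx0 : ∀ i, τ • x i = 0 := fun i => (hfix _).1 (hxV i).2
  have hαk : ∀ i, ∀ j, k i ≤ j → τ ^ j • α i = 0 := by
    intro i j hj
    have hk1 := (hk i).1
    have h1 : τ ^ (k i) • α i = 0 := by
      rw [show k i = (k i - 1) + 1 by omega, pow_succ', mul_smul, hα i, hx0 i]
    rw [show j = (j - k i) + (k i) by omega, pow_add, mul_smul, h1, smul_zero]
  -- representation of r • α i in terms of τ-powers
  have hrep : ∀ (r : MonoidAlgebra (ZMod p) G) (i : ι), ∃ c : ℕ → ZMod p,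
      r • α i = ∑ j ∈ Finset.range (k i), c j • (τ ^ j • α i) := by
    intro r i
    have hr := aux_span_tau p σ hσ r
    rw [Finsupp.mem_span_range_iff_exists_finsupp] at hr
    obtain ⟨l, hl⟩ := hr
    refine ⟨fun j => l j, ?_⟩
    rw [← hl, Finsupp.sum, Finset.sum_smul]
    have e : ∀ j ∈ l.support, (l j • τ ^ j) • α i = l j • (τ ^ j • α i) :=
      fun j _ => smul_assoc _ _ _
    rw [Finset.sum_congr rfl e]
    have e1 : ∑ j ∈ l.support, l j • (τ ^ j • α i)
        = ∑ j ∈ l.support ∪ Finset.range (k i), l j • (τ ^ j • α i) :=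
      Finset.sum_subset Finset.subset_union_left (fun j _ hj => by
        rw [Finsupp.notMem_support_iff.1 hj, zero_smul])
    have e2 : ∑ j ∈ Finset.range (k i), l j • (τ ^ j • α i)
        = ∑ j ∈ l.support ∪ Finset.range (k i), l j • (τ ^ j • α i) :=
      Finset.sum_subset Finset.subset_union_right (fun j _ hj => by
        rw [hαk i j (le_of_not_gt fun h => hj (Finset.mem_range.2 h)), smul_zero])
    rw [e1, ← e2]
  -- the key linear independence statement, by downward induction
  have hQ : ∀ t : ℕ, ∀ (s : Finset ι) (c : ι → ℕ → ZMod p),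
      (∀ i ∈ s, ∀ j < k i, c i j ≠ 0 → k i - 1 - j < t) →
      (∑ i ∈ s, ∑ j ∈ Finset.range (k i), c i j • (τ ^ j • α i)) = 0 →
      ∀ i ∈ s, ∀ j < k i, c i j = 0 := by
    intro t
    induction t with
    | zero =>
      intro s c hc _ i hi j hj
      by_contra h
      exact absurd (hc i hi j hj h) (by omega)
    | succ t ih =>
      intro s c hc hrel i hi j hj
      have hstep : ∀ i ∈ s, τ ^ t • (∑ j ∈ Finset.range (k i), c i j • (τ ^ j • α i))
          = (if t + 1 ≤ k i then c i (k i - 1 - t) else 0) • x i := by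
        intro i hi
        rw [Finset.smul_sum]
        have e : ∀ j ∈ Finset.range (k i),
            τ ^ t • (c i j • (τ ^ j • α i)) = c i j • (τ ^ (t + j) • α i) := by
          intro j _
          rw [smul_comm (τ ^ t) (c i j), smul_smul, ← pow_add]
        rw [Finset.sum_congr rfl e]
        by_cases hti : t + 1 ≤ k i
        · rw [if_pos hti, Finset.sum_eq_single (k i - 1 - t)]
          · have h3 : t + (k i - 1 - t) = k i - 1 := by omega
            rw [h3, hα i]
          · intro j hjr hne
            by_cases hlt : j < k i - 1 - t
            · have hc0 : c i j = 0 := by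
                by_contra hne0
                have := hc i hi j (Finset.mem_range.1 hjr) hne0
                omega
              rw [hc0, zero_smul]
            · rw [hαk i (t + j) (by omega), smul_zero]
          · intro habs
            exact absurd (Finset.mem_range.2 (by omega)) habs
        · rw [if_neg hti, zero_smul]
          apply Finset.sum_eq_zero
          intro j _
          rw [hαk i (t + j) (by omega), smul_zero]
      have hrel2 : ∑ i ∈ s, (if t + 1 ≤ k i then c i (k i - 1 - t) else 0) • x i = 0 := by
        have h2 := congrArg (fun w : W => τ ^ t • w) hrel
        simp only [smul_zero] at h2
        rw [Finset.smul_sum, Finset.sum_congr rfl hstep] at h2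
        exact h2
      have hd := linearIndependent_iff'.1 hindep s _ hrel2
      refine ih s c ?_ hrel i hi j hj
      intro i' hi' j' hj' hne
      have h1 := hc i' hi' j' hj' hne
      rcases Nat.lt_succ_iff_lt_or_eq.1 h1 with h | h
      · exact h
      · exfalso
        have ht : t + 1 ≤ k i' := by omega
        have hj'' : j' = k i' - 1 - t := by omega
        have h4 := hd i' hi'
        rw [if_pos ht] at h4
        rw [hj''] at hne
        exact hne h4
  have hcentral : ∀ (s : Finset ι) (r : ι → MonoidAlgebra (ZMod p) G),
      ∑ i ∈ s, r i • α i = 0 → ∀ i ∈ s, r i • α i = 0 := by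
    intro s r hrel
    choose c hc using fun i => hrep (r i) i
    have h0 : ∀ i ∈ s, ∀ j < k i, c i j = 0 := by
      apply hQ (p ^ n) s c
      · intro i hi j hj _
        have := (hk i).2
        omega
      · rw [← hrel]
        exact (Finset.sum_congr rfl fun i _ => (hc i).symm)
    intro i hi
    rw [hc i]
    exact Finset.sum_eq_zero fun j hj => by
      rw [h0 i hi j (Finset.mem_range.1 hj), zero_smul]
  -- spanning
  have hU : ∀ m : ℕ, ∀ w : W, τ ^ m • w = 0 →
      w ∈ ⨆ i, Submodule.span (MonoidAlgebra (ZMod p) G) {α i} := by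
    intro m
    induction m with
    | zero =>
      intro w hw
      rw [pow_zero, one_smul] at hw
      rw [hw]; exact Submodule.zero_mem _
    | succ m ih =>
      intro w hw
      by_cases hm : p ^ n ≤ m
      · apply ih
        have hτm : τ ^ m = 0 := by
          rw [show m = (m - p ^ n) + p ^ n by omega, pow_add, hτpn, mul_zero]
        rw [hτm, zero_smul]
      · push_neg at hm
        have hz : τ ^ m • w ∈ Vset p σ W (m + 1) := by
          refine ⟨⟨w, ?_⟩, (hfix _).2 ?_⟩
          · show τ ^ (m + 1 - 1) • w = τ ^ m • w
            norm_num
          · rw [smul_smul, ← pow_succ']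
            exact hw
        have hz2 := hspan (m + 1) (by omega) (by omega) hz
        rw [SetLike.mem_coe, Finsupp.mem_span_image_iff_linearCombination] at hz2
        obtain ⟨l, hls, hlz⟩ := hz2
        have hsupp : ∀ i ∈ l.support, m + 1 ≤ k i := by
          intro i hi
          exact (Finsupp.mem_supported _ _).1 hls hi
        have key : τ ^ m • (w - ∑ i ∈ l.support, l i • (τ ^ (k i - 1 - m) • α i)) = 0 := by
          rw [smul_sub, Finset.smul_sum]
          have e : ∀ i ∈ l.support,
              τ ^ m • (l i • (τ ^ (k i - 1 - m) • α i)) = l i • x i := by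
            intro i hi
            rw [smul_comm (τ ^ m) (l i), smul_smul, ← pow_add]
            have h3 : m + (k i - 1 - m) = k i - 1 := by
              have h4 := hsupp i hi
              omega
            rw [h3, hα i]
          rw [Finset.sum_congr rfl e]
          have h5 : ∑ i ∈ l.support, l i • x i = τ ^ m • w := by
            rw [← hlz, Finsupp.linearCombination_apply, Finsupp.sum]
          rw [h5, sub_self]
        have h1 := ih _ key
        have h2 : (∑ i ∈ l.support, l i • (τ ^ (k i - 1 - m) • α i))
            ∈ ⨆ i, Submodule.span (MonoidAlgebra (ZMod p) G) {α i} := by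
          apply Submodule.sum_mem
          intro i _
          apply Submodule.smul_of_tower_mem
          exact Submodule.mem_iSup_of_mem i
            (Submodule.smul_mem _ _ (Submodule.mem_span_singleton_self _))
        have h6 := Submodule.add_mem _ h1 h2
        simpa using h6
  have htop : (⨆ i, Submodule.span (MonoidAlgebra (ZMod p) G) {α i}) = ⊤ :=
    eq_top_iff.2 fun w _ => hU (p ^ n) w (by rw [hτpn, zero_smul])
  refine ⟨?_, htop⟩
  rw [iSupIndep_def]
  intro i0
  rw [Submodule.disjoint_def]
  intro w hw1 hw2
  rw [Submodule.mem_span_singleton] at hw1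
  obtain ⟨r, hr⟩ := hw1
  rw [Submodule.mem_iSup_iff_exists_finsupp] at hw2
  obtain ⟨f, hf1, hf2⟩ := hw2
  have hfi0 : f i0 = 0 := by
    have h7 := hf1 i0
    rw [iSup_neg (by simp)] at h7
    simpa using h7
  have hfj : ∀ j, j ≠ i0 → ∃ rj : MonoidAlgebra (ZMod p) G, f j = rj • α j := by
    intro j hj
    have h8 := hf1 j
    rw [iSup_pos hj, Submodule.mem_span_singleton] at h8
    obtain ⟨rj, hrj⟩ := h8
    exact ⟨rj, hrj.symm⟩
  choose rr hrr using hfj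
  have hi0s : i0 ∉ f.support := by simp [Finsupp.notMem_support_iff, hfi0]
  set g : ι → MonoidAlgebra (ZMod p) G := fun j => if h : j = i0 then -r else rr j h with hg
  have hsum : ∑ j ∈ insert i0 f.support, g j • α j = 0 := by
    rw [Finset.sum_insert hi0s]
    have hgi0 : g i0 = -r := by simp [hg]
    have h9 : ∑ j ∈ f.support, g j • α j = ∑ j ∈ f.support, f j := by
      apply Finset.sum_congr rfl
      intro j hj
      have hjne : j ≠ i0 := fun h => hi0s (h ▸ hj)
      rw [show g j = rr j hjne by simp [hg, hjne], ← hrr j hjne]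
    have h10 : ∑ j ∈ f.support, f j = w := by rw [← hf2]; rfl
    rw [hgi0, h9, h10, neg_smul, hr, neg_add_cancel]
  have h11 := hcentral _ g hsum i0 (Finset.mem_insert_self _ _)
  rw [show g i0 = -r by simp [hg], neg_smul, hr] at h11
  exact neg_eq_zero.1 h11
end
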